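/- The function h is strictly increasing on the interval (r₊, r] and strictly decreasing on the interval [r, ∞); equivalently, h'(x) > 0 for r₊ < x < r and h'(x) < 0 for x > r. -/

import Mathlib

theorem aux_hasDeriv (M c r x : ℝ) (D : ℝ → ℝ)
    (hD : ∀ y, D y = y^2 - 2*M*y + c)
    (hM : 0 < M) (hκ : 0 < M^2 - c)
    (hr : M + Real.sqrt (M^2 - c) < r) (hx : M + Real.sqrt (M^2 - c) < x) :
    HasDerivAt (fun y => 4*y*Real.sqrt (D r * D y) / ((2*y - 2*M)*(r^2 - y^2) + 4*y*D y))
      (-8*(D r)*(x - r)*(x + r)*((x - M)^3 + M*(M^2 - c)) /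
        (Real.sqrt (D r * D x) * ((2*x - 2*M)*(r^2 - x^2) + 4*x*D x)^2)) x := by
  set s := Real.sqrt (M^2 - c) with hs
  have hs0 : 0 < s := Real.sqrt_pos.mpr hκ
  have hs2 : s^2 = M^2 - c := Real.sq_sqrt hκ.le
  have hxM : M + s < x := hx
  have hDx : 0 < D x := by rw [hD]; nlinarith [mul_pos (show (0:ℝ) < x - M - s by linarith) (show (0:ℝ) < x - M + s by linarith)]
  have hDr : 0 < D r := by rw [hD]; nlinarith [mul_pos (show (0:ℝ) < r - M - s by linarith) (show (0:ℝ) < r - M + s by linarith)]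
  have hq : 0 < D r * D x := mul_pos hDr hDx
  have ht0 : 0 < Real.sqrt (D r * D x) := Real.sqrt_pos.mpr hq
  have ht2 : (Real.sqrt (D r * D x))^2 = D r * D x := Real.sq_sqrt hq.le
  have hN : 0 < (2*x - 2*M)*(r^2 - x^2) + 4*x*D x := by
    rw [hD]
    rcases le_or_gt x r with hc | hc
    · nlinarith [mul_nonneg (show (0:ℝ) ≤ x - M by linarith)
          (show (0:ℝ) ≤ r^2 - x^2 by nlinarith),
        mul_pos (show (0:ℝ) < x by linarith) hDx, hD x]
    · nlinarith [mul_pos (show (0:ℝ) < x - M - s by linarith)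
          (show (0:ℝ) < (x-M)^2 + s*(x+M) by nlinarith),
        mul_pos (show (0:ℝ) < x - M by linarith)
          (mul_pos (show (0:ℝ) < r - M - s by linarith) (show (0:ℝ) < r + M + s by linarith))]
  have hNne : ((2*x - 2*M)*(r^2 - x^2) + 4*x*(x^2 - 2*M*x + c)) ≠ 0 := by
    rw [hD] at hN; exact ne_of_gt hN
  have hfun : (fun y => 4*y*Real.sqrt (D r * D y) / ((2*y - 2*M)*(r^2 - y^2) + 4*y*D y))
      = (fun y => 4*y*Real.sqrt ((r^2 - 2*M*r + c) * (y^2 - 2*M*y + c)) /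
          ((2*y - 2*M)*(r^2 - y^2) + 4*y*(y^2 - 2*M*y + c))) := by
    funext y; rw [hD, hD]
  rw [hfun]
  have d1 : HasDerivAt (fun y : ℝ => y^2 - 2*M*y + c) (2*x - 2*M) x := by
    have := (((hasDerivAt_pow 2 x).sub ((hasDerivAt_id x).const_mul (2*M))).add_const c)
    exact this.congr_deriv (by simp)
  have d2 : HasDerivAt (fun y : ℝ => (r^2 - 2*M*r + c) * (y^2 - 2*M*y + c))
      ((r^2 - 2*M*r + c) * (2*x - 2*M)) x := d1.const_mul _
  have hqx : (r^2 - 2*M*r + c) * (x^2 - 2*M*x + c) ≠ 0 := by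
    rw [hD, hD] at hq; exact ne_of_gt hq
  have d3 := d2.sqrt hqx
  have d4 : HasDerivAt (fun y : ℝ => 4*y) (4:ℝ) x := by
    simpa using (hasDerivAt_id x).const_mul (4:ℝ)
  have d5 := d4.mul d3
  have e1 : HasDerivAt (fun y : ℝ => 2*y - 2*M) (2:ℝ) x := by
    simpa using ((hasDerivAt_id x).const_mul (2:ℝ)).sub_const (2*M)
  have e2 : HasDerivAt (fun y : ℝ => r^2 - y^2) (-(2*x)) x := by
    have := (hasDerivAt_pow 2 x).const_sub (r^2)
    exact this.congr_deriv (by simp)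
  have e3 := e1.mul e2
  have e4 := d4.mul d1
  have e5 := e3.add e4
  have hder := d5.div e5 hNne
  refine hder.congr_deriv ?_
  symm
  rw [hD, hD]
  rw [hD, hD] at ht0 ht2
  simp only [Pi.mul_apply, Pi.add_apply]
  set t := Real.sqrt ((r^2 - 2*M*r + c) * (x^2 - 2*M*x + c)) with htdef
  field_simp
  rw [ht2, ← neg_div]
  congr 1
  ring

theorem aux_pos (M c r x : ℝ) (hM : 0 < M) (hκ : 0 < M^2 - c)
    (hr : M + Real.sqrt (M^2 - c) < r) (hx : M + Real.sqrt (M^2 - c) < x) :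
    0 < x^2 - 2*M*x + c ∧ 0 < (2*x - 2*M)*(r^2 - x^2) + 4*x*(x^2 - 2*M*x + c) ∧
      0 < (x - M)^3 + M*(M^2 - c) := by
  set s := Real.sqrt (M^2 - c) with hs
  have hs0 : 0 < s := Real.sqrt_pos.mpr hκ
  have hs2 : s^2 = M^2 - c := Real.sq_sqrt hκ.le
  have hDx : 0 < x^2 - 2*M*x + c := by
    nlinarith [mul_pos (show (0:ℝ) < x - M - s by linarith) (show (0:ℝ) < x - M + s by linarith)]
  refine ⟨hDx, ?_, ?_⟩
  · rcases le_or_gt x r with hc | hc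
    · nlinarith [mul_nonneg (show (0:ℝ) ≤ x - M by linarith)
          (show (0:ℝ) ≤ r^2 - x^2 by nlinarith),
        mul_pos (show (0:ℝ) < x by linarith) hDx]
    · nlinarith [mul_pos (show (0:ℝ) < x - M - s by linarith)
          (show (0:ℝ) < (x-M)^2 + s*(x+M) by nlinarith),
        mul_pos (show (0:ℝ) < x - M by linarith)
          (mul_pos (show (0:ℝ) < r - M - s by linarith) (show (0:ℝ) < r + M + s by linarith))]
  · have : 0 < (x - M)^3 := pow_pos (by linarith) 3
    nlinarith

theorem stmt_7 (M a l Q rp r : ℝ) (Δ h : ℝ → ℝ)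
    (hM : 0 < M) (ha : 0 < a) (hsub : 0 < M^2 - a^2 + l^2 - Q^2)
    (hΔ : ∀ x, Δ x = x^2 - 2*M*x + a^2 - l^2 + Q^2)
    (hrp : rp = M + Real.sqrt (M^2 - a^2 + l^2 - Q^2))
    (hr : rp < r)
    (hh : ∀ x, h x = 4*x*Real.sqrt (Δ r * Δ x) /
        ((2*x - 2*M)*(r^2 - x^2) + 4*x*Δ x)) :
    StrictMonoOn h (Set.Ioc rp r) ∧ StrictAntiOn h (Set.Ici r) ∧
      (∀ x, rp < x → x < r → 0 < deriv h x) ∧ (∀ x, r < x → deriv h x < 0) := by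
  have hceq : M^2 - (a^2 - l^2 + Q^2) = M^2 - a^2 + l^2 - Q^2 := by ring
  have hκ' : 0 < M^2 - (a^2 - l^2 + Q^2) := by rw [hceq]; exact hsub
  have hD' : ∀ y, Δ y = y^2 - 2*M*y + (a^2 - l^2 + Q^2) := fun y => by rw [hΔ]; ring
  have hfun : h = fun y => 4*y*Real.sqrt (Δ r * Δ y) /
      ((2*y - 2*M)*(r^2 - y^2) + 4*y*Δ y) := funext hh
  have hrp' : ∀ x : ℝ, rp < x → M + Real.sqrt (M^2 - (a^2 - l^2 + Q^2)) < x := by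
    intro x hx; rw [hceq, ← hrp]; exact hx
  have key : ∀ x, rp < x → HasDerivAt h
      (-8*(Δ r)*(x - r)*(x + r)*((x - M)^3 + M*(M^2 - (a^2 - l^2 + Q^2))) /
        (Real.sqrt (Δ r * Δ x) * ((2*x - 2*M)*(r^2 - x^2) + 4*x*Δ x)^2)) x := by
    intro x hx
    rw [hfun]
    exact aux_hasDeriv M (a^2 - l^2 + Q^2) r x Δ hD' hM hκ' (hrp' r hr) (hrp' x hx)
  have hΔr : 0 < Δ r := by
    rw [hD' r]; exact (aux_pos M (a^2-l^2+Q^2) r r hM hκ' (hrp' r hr) (hrp' r hr)).1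
  have hΔx : ∀ x, rp < x → 0 < Δ x := by
    intro x hx
    rw [hD' x]; exact (aux_pos M (a^2-l^2+Q^2) r x hM hκ' (hrp' r hr) (hrp' x hx)).1
  have hN : ∀ x, rp < x → 0 < (2*x - 2*M)*(r^2 - x^2) + 4*x*Δ x := by
    intro x hx
    rw [hD' x]; exact (aux_pos M (a^2-l^2+Q^2) r x hM hκ' (hrp' r hr) (hrp' x hx)).2.1
  have hG : ∀ x, rp < x → 0 < (x - M)^3 + M*(M^2 - (a^2 - l^2 + Q^2)) := by
    intro x hx
    exact (aux_pos M (a^2-l^2+Q^2) r x hM hκ' (hrp' r hr) (hrp' x hx)).2.2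
  have hden : ∀ x, rp < x →
      0 < Real.sqrt (Δ r * Δ x) * ((2*x - 2*M)*(r^2 - x^2) + 4*x*Δ x)^2 := by
    intro x hx
    exact mul_pos (Real.sqrt_pos.mpr (mul_pos hΔr (hΔx x hx))) (pow_pos (hN x hx) 2)
  have hrpos : 0 < rp := by
    rw [hrp]; positivity
  have hdpos : ∀ x, rp < x → x < r → 0 < deriv h x := by
    intro x hx1 hx2
    rw [(key x hx1).deriv]
    apply div_pos _ (hden x hx1)
    have h1 : 0 < 8*(Δ r)*(r - x)*(x + r)*((x - M)^3 + M*(M^2 - (a^2 - l^2 + Q^2))) :=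
      mul_pos (mul_pos (mul_pos (by linarith) (by linarith)) (by linarith)) (hG x hx1)
    nlinarith [h1]
  have hdneg : ∀ x, r < x → deriv h x < 0 := by
    intro x hx1
    have hx0 : rp < x := lt_trans hr hx1
    rw [(key x hx0).deriv]
    apply div_neg_of_neg_of_pos _ (hden x hx0)
    have h1 : 0 < 8*(Δ r)*(x - r)*(x + r)*((x - M)^3 + M*(M^2 - (a^2 - l^2 + Q^2))) :=
      mul_pos (mul_pos (mul_pos (by linarith) (by linarith)) (by linarith)) (hG x hx0)
    nlinarith [h1]
  refine ⟨?_, ?_, hdpos, hdneg⟩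
  · apply strictMonoOn_of_deriv_pos (convex_Ioc rp r)
    · intro x hx
      exact (key x hx.1).continuousAt.continuousWithinAt
    · intro x hx
      rw [interior_Ioc] at hx
      exact hdpos x hx.1 hx.2
  · apply strictAntiOn_of_deriv_neg (convex_Ici r)
    · intro x hx
      exact (key x (lt_of_lt_of_le hr hx)).continuousAt.continuousWithinAt
    · intro x hx
      rw [interior_Ici] at hx
      exact hdneg x hx
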